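/- (Vitali–Lebesgue, one direction) If f : [0,1] → ℝ is Riemann integrable, then the set of points of [0,1] at which f is discontinuous has Lebesgue measure zero. -/

import Mathlib

/-- `I` is the Riemann integral of `f` over `[a,b]`: for every `ε > 0` there is `δ > 0` such
that every tagged partition of `[a,b]` with mesh less than `δ` has Riemann sum within `ε`
of `I`. -/
def IsRiemannIntegralOn (f : ℝ → ℝ) (a b I : ℝ) : Prop :=
  ∀ ε > (0:ℝ), ∃ δ > (0:ℝ), ∀ (n : ℕ) (x t : ℕ → ℝ),
    x 0 = a → x n = b →
    (∀ i < n, x i ≤ x (i + 1)) →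
    (∀ i < n, x (i + 1) - x i < δ) →
    (∀ i < n, t i ∈ Set.Icc (x i) (x (i + 1))) →
    |(∑ i ∈ Finset.range n, f (t i) * (x (i + 1) - x i)) - I| < ε

open MeasureTheory Set

lemma Dk_null (f : ℝ → ℝ) (I : ℝ) (hf : IsRiemannIntegralOn f 0 1 I) (c : ℝ) (hc : 0 < c) :
    volume {x : ℝ | x ∈ Icc (0:ℝ) 1 ∧
      ∀ δ > (0:ℝ), ∃ y ∈ Icc (0:ℝ) 1, |y - x| < δ ∧ c ≤ |f y - f x|} = 0 := by
  classical
  set D : Set ℝ := {x : ℝ | x ∈ Icc (0:ℝ) 1 ∧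
      ∀ δ > (0:ℝ), ∃ y ∈ Icc (0:ℝ) 1, |y - x| < δ ∧ c ≤ |f y - f x|} with hD
  have main : ∀ η : ℝ, 0 < η → volume D ≤ ENNReal.ofReal η := by
    intro η hη
    obtain ⟨δ, hδ, H⟩ := hf (c * η / 2) (by positivity)
    obtain ⟨n, hn⟩ := exists_nat_one_div_lt hδ
    set N : ℕ := n + 1 with hN
    have hN0 : (0:ℝ) < N := by positivity
    set X : ℕ → ℝ := fun i => (i : ℝ) / N with hX
    have hX0 : X 0 = 0 := by simp [hX]
    have hXN : X N = 1 := by simp only [hX]; exact div_self hN0.ne'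
    have hgapeq : ∀ i : ℕ, X (i + 1) - X i = 1 / N := by
      intro i; simp only [hX]; push_cast; ring
    have hmono : ∀ i < N, X i ≤ X (i + 1) := by
      intro i _; have := hgapeq i; nlinarith [one_div_pos.mpr hN0]
    have hgap : ∀ i < N, X (i + 1) - X i < δ := by
      intro i _; rw [hgapeq]; exact_mod_cast hn
    set P : ℕ → Prop := fun i => ∃ p, p ∈ D ∧ p ∈ Ioo (X i) (X (i + 1)) with hP
    have key : ∀ i : ℕ, ∃ t s : ℝ, t ∈ Icc (X i) (X (i+1)) ∧ s ∈ Icc (X i) (X (i+1)) ∧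
        0 ≤ f t - f s ∧ (P i → c ≤ f t - f s) := by
      intro i
      have hlen : X i < X (i+1) := by
        have := hgapeq i; nlinarith [one_div_pos.mpr hN0]
      by_cases h : P i
      · obtain ⟨p, hpD, hpI⟩ := h
        have hδ' : 0 < min (p - X i) (X (i+1) - p) :=
          lt_min (by linarith [hpI.1]) (by linarith [hpI.2])
        obtain ⟨y, hy01, hyd, hyc⟩ := hpD.2 _ hδ'
        have hyd' := abs_lt.mp hyd
        have hm1 := min_le_left (p - X i) (X (i+1) - p)
        have hm2 := min_le_right (p - X i) (X (i+1) - p)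
        have hyI : y ∈ Icc (X i) (X (i+1)) := by
          constructor
          · linarith [hyd'.1]
          · linarith [hyd'.2]
        have hpIcc : p ∈ Icc (X i) (X (i+1)) := ⟨hpI.1.le, hpI.2.le⟩
        rcases le_total (f y) (f p) with h' | h'
        · rw [abs_sub_comm, abs_of_nonneg (by linarith)] at hyc
          exact ⟨p, y, hpIcc, hyI, by linarith, fun _ => by linarith⟩
        · rw [abs_of_nonneg (by linarith)] at hyc
          exact ⟨y, p, hyI, hpIcc, by linarith, fun _ => by linarith⟩
      · exact ⟨X i, X i, ⟨le_refl _, hlen.le⟩, ⟨le_refl _, hlen.le⟩, by simp,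
          fun hPi => absurd hPi h⟩
    choose t s ht hs hpos hbad using key
    have h1 := H N X t hX0 hXN hmono hgap (fun i _ => ht i)
    have h2 := H N X s hX0 hXN hmono hgap (fun i _ => hs i)
    have hsum : ∑ i ∈ Finset.range N, (f (t i) - f (s i)) * (X (i+1) - X i) < c * η := by
      have heq : ∑ i ∈ Finset.range N, (f (t i) - f (s i)) * (X (i+1) - X i)
          = (∑ i ∈ Finset.range N, f (t i) * (X (i+1) - X i))
            - ∑ i ∈ Finset.range N, f (s i) * (X (i+1) - X i) := by
        rw [← Finset.sum_sub_distrib]; exact Finset.sum_congr rfl fun i _ => by ring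
      rw [heq]
      have := abs_lt.mp h1
      have := abs_lt.mp h2
      linarith
    set B : Finset ℕ := (Finset.range N).filter P with hB
    have hcard : (B.card : ℝ) * (1 / N) * c < c * η := by
      have hle : (B.card : ℝ) * (1 / N) * c
          ≤ ∑ i ∈ Finset.range N, (f (t i) - f (s i)) * (X (i+1) - X i) := by
        have h1' : (B.card : ℝ) * (1 / N) * c = ∑ _i ∈ B, c * (1 / N) := by
          rw [Finset.sum_const, nsmul_eq_mul]; ring
        rw [h1']
        have step1 : ∑ _i ∈ B, c * (1 / N)
            ≤ ∑ i ∈ B, (f (t i) - f (s i)) * (X (i+1) - X i) := by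
          refine Finset.sum_le_sum fun i hi => ?_
          have hPi : P i := (Finset.mem_filter.mp hi).2
          rw [hgapeq i]
          have := hbad i hPi
          nlinarith [one_div_pos.mpr hN0]
        refine step1.trans ?_
        refine Finset.sum_le_sum_of_subset_of_nonneg (Finset.filter_subset _ _) ?_
        intro i _ _
        have := hpos i
        have := hgapeq i
        nlinarith [one_div_pos.mpr hN0]
      linarith
    have hfrac : (B.card : ℝ) * (1 / N) ≤ η := by nlinarith
    have hcover : D ⊆ (⋃ i ∈ B, Ioo (X i) (X (i+1))) ∪ (X '' (Iic N)) := by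
      intro p hpD
      have hp01 : p ∈ Icc (0:ℝ) 1 := hpD.1
      by_cases hpn : ∃ j ≤ N, p = X j
      · obtain ⟨j, hj, rfl⟩ := hpn
        exact Or.inr ⟨j, hj, rfl⟩
      · push_neg at hpn
        have hexists : ∃ i < N, X i ≤ p ∧ p ≤ X (i+1) := by
          by_cases hp : p = 1
          · refine ⟨n, Nat.lt_succ_self n, ?_, ?_⟩
            · rw [hp, hX]
              rw [div_le_one hN0]
              exact_mod_cast Nat.le_succ n
            · rw [hp]
              have : X (n+1) = X N := rfl
              rw [this, hXN]
          · have hplt : p < 1 := lt_of_le_of_ne hp01.2 hp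
            have hp0 : (0:ℝ) ≤ p := hp01.1
            refine ⟨⌊p * N⌋₊, ?_, ?_, ?_⟩
            · rw [Nat.floor_lt (by positivity)]
              nlinarith
            · rw [hX]
              rw [div_le_iff₀ hN0]
              exact Nat.floor_le (by positivity)
            · rw [hX]
              rw [le_div_iff₀ hN0]
              have h' := (Nat.lt_floor_add_one (p * (N:ℝ))).le
              push_cast at h' ⊢
              linarith
        obtain ⟨i, hiN, hle1, hle2⟩ := hexists
        have hlt1 : X i < p := lt_of_le_of_ne hle1 fun he => hpn i hiN.le he.symm
        have hlt2 : p < X (i+1) := lt_of_le_of_ne hle2 fun he => hpn (i+1) hiN he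
        left
        refine mem_biUnion ?_ ⟨hlt1, hlt2⟩
        exact Finset.mem_filter.mpr ⟨Finset.mem_range.mpr hiN, ⟨p, hpD, hlt1, hlt2⟩⟩
    calc volume D ≤ volume ((⋃ i ∈ B, Ioo (X i) (X (i+1))) ∪ (X '' (Iic N))) :=
          measure_mono hcover
      _ ≤ volume (⋃ i ∈ B, Ioo (X i) (X (i+1))) + volume (X '' (Iic N)) := measure_union_le _ _
      _ ≤ ENNReal.ofReal η := by
          have hz : volume (X '' (Iic N)) = 0 :=
            ((finite_Iic N).image X).measure_zero _
          rw [hz, add_zero]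
          calc volume (⋃ i ∈ B, Ioo (X i) (X (i+1)))
              ≤ ∑ i ∈ B, volume (Ioo (X i) (X (i+1))) := measure_biUnion_finset_le _ _
            _ = ∑ _i ∈ B, ENNReal.ofReal (1 / N) := by
                refine Finset.sum_congr rfl fun i _ => ?_
                rw [Real.volume_Ioo, hgapeq i]
            _ = ENNReal.ofReal ((B.card : ℝ) * (1 / N)) := by
                rw [Finset.sum_const, nsmul_eq_mul]
                rw [ENNReal.ofReal_mul (by positivity)]
                simp
            _ ≤ ENNReal.ofReal η := ENNReal.ofReal_le_ofReal hfrac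
  refine le_antisymm ?_ zero_le
  refine ENNReal.le_of_forall_pos_le_add fun ε hε _ => ?_
  rw [zero_add]
  calc volume D ≤ ENNReal.ofReal ε := main ε (by exact_mod_cast hε)
    _ ≤ ε := ENNReal.ofReal_coe_nnreal.le

/-- Vitali–Lebesgue (one direction): if `f` is Riemann integrable on `[0,1]`, then its set of
discontinuity points in `[0,1]` has Lebesgue measure zero. -/
theorem riemann_integrable_discontinuity_measure_zero (f : ℝ → ℝ) (I : ℝ)
    (hf : IsRiemannIntegralOn f 0 1 I) :
    MeasureTheory.volume
      {x : ℝ | x ∈ Set.Icc (0:ℝ) 1 ∧ ¬ ContinuousWithinAt f (Set.Icc (0:ℝ) 1) x} = 0 := by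
  have hsub : {x : ℝ | x ∈ Set.Icc (0:ℝ) 1 ∧ ¬ ContinuousWithinAt f (Set.Icc (0:ℝ) 1) x}
      ⊆ ⋃ k : ℕ, {x : ℝ | x ∈ Icc (0:ℝ) 1 ∧
        ∀ δ > (0:ℝ), ∃ y ∈ Icc (0:ℝ) 1, |y - x| < δ ∧ 1/((k:ℝ)+1) ≤ |f y - f x|} := by
    rintro x ⟨hx, hnc⟩
    rw [Metric.continuousWithinAt_iff] at hnc
    push_neg at hnc
    obtain ⟨ε, hε, hεx⟩ := hnc
    obtain ⟨k, hk⟩ := exists_nat_one_div_lt hε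
    refine mem_iUnion.mpr ⟨k, hx, fun δ hδ => ?_⟩
    obtain ⟨y, hy, hyd, hyε⟩ := hεx δ hδ
    refine ⟨y, hy, ?_, ?_⟩
    · rwa [Real.dist_eq] at hyd
    · rw [Real.dist_eq] at hyε
      linarith [hk.le]
  refine measure_mono_null hsub (measure_iUnion_null fun k => ?_)
  exact Dk_null f I hf _ (by positivity)
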